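/- Let ι, κ be finite types, ∂ : (ι → 𝔽₂) →ₗ (κ → 𝔽₂) an 𝔽₂-linear map, c ≥ 1 a natural number, and 𝔮 the maximum over i ∈ ι of |∂(δ_i)|. Then for every e ∈ (ι → 𝔽₂), the energy barriers satisfy Δ₁(e) ≤ Δ_c(e) + c·𝔮. -/

import Mathlib

section aux
variable {ι κ : Type*} [Fintype ι] [Fintype κ] [DecidableEq ι]

lemma hn_add_le (x y : ι → ZMod 2) :
    hammingNorm (x + y) ≤ hammingNorm x + hammingNorm y := by
  calc hammingNorm (x + y) = hammingDist (x + y) 0 := (hammingDist_zero_right _).symm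
    _ ≤ hammingDist (x + y) y + hammingDist y 0 := hammingDist_triangle _ _ _
    _ = hammingNorm x + hammingNorm y := by
        rw [hammingDist_eq_hammingNorm, hammingDist_zero_right]
        rw [show -(x + y) + y = x by
          ext i; simp only [Pi.add_apply, Pi.neg_apply]
          generalize x i = a; generalize y i = b; revert a b; decide]

omit [DecidableEq ι] in
lemma hn_sum_le {α : Type*} (s : Finset α) (f : α → ι → ZMod 2) :
    hammingNorm (∑ i ∈ s, f i) ≤ ∑ i ∈ s, hammingNorm (f i) := by
  classical
  induction s using Finset.induction_on with
  | empty => simp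
  | @insert a s ha ih =>
    rw [Finset.sum_insert ha, Finset.sum_insert ha]
    exact (hn_add_le _ _).trans (Nat.add_le_add_left ih _)

lemma hn_single_le (a : ι) (b : ZMod 2) : hammingNorm (Pi.single a b : ι → ZMod 2) ≤ 1 := by
  have : (Finset.univ.filter fun i => (Pi.single a b : ι → ZMod 2) i ≠ 0) ⊆ {a} := by
    intro i hi
    simp only [Finset.mem_filter, Finset.mem_univ, true_and, ne_eq, Pi.single_apply] at hi
    simp only [Finset.mem_singleton]
    by_contra h
    simp [h] at hi
  calc hammingNorm (Pi.single a b : ι → ZMod 2) = (Finset.univ.filter fun i => (Pi.single a b : ι → ZMod 2) i ≠ 0).card := rfl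
    _ ≤ ({a} : Finset ι).card := Finset.card_le_card this
    _ = 1 := Finset.card_singleton a

lemma filter_sum_eq (w : ι → ZMod 2) :
    ∑ i ∈ Finset.univ.filter (fun i => w i ≠ 0), Pi.single i (w i) = w := by
  rw [Finset.sum_filter_of_ne (p := fun i => w i ≠ 0) ?h, Finset.univ_sum_single]
  intro i _ h hw
  exact h (by simp [hw])

lemma hn_filter (w : ι → ZMod 2) :
    (Finset.univ.filter (fun i => w i ≠ 0)).card = hammingNorm w := rfl

end aux

section main
variable {ι κ : Type*} [Fintype ι] [Fintype κ] [DecidableEq ι]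
variable (d : (ι → ZMod 2) →ₗ[ZMod 2] (κ → ZMod 2))

lemma hn_single_d_le (q : ℕ)
    (hq : ∀ i : ι, hammingNorm (d (Pi.single i 1)) ≤ q) (i : ι) (b : ZMod 2) :
    hammingNorm (d (Pi.single i b)) ≤ q := by
  have hb : b = 0 ∨ b = 1 := by fin_cases b <;> [exact Or.inl rfl; exact Or.inr rfl]
  rcases hb with hb | hb
  · simp [hb]
  · rw [hb]; exact hq i

lemma hn_d_le (q : ℕ) (hq : ∀ i : ι, hammingNorm (d (Pi.single i 1)) ≤ q)
    (w : ι → ZMod 2) : hammingNorm (d w) ≤ hammingNorm w * q := by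
  set s := Finset.univ.filter (fun i => w i ≠ 0) with hs
  calc hammingNorm (d w) = hammingNorm (∑ i ∈ s, d (Pi.single i (w i))) := by
        rw [← map_sum, filter_sum_eq]
    _ ≤ ∑ i ∈ s, hammingNorm (d (Pi.single i (w i))) := hn_sum_le _ _
    _ ≤ ∑ _i ∈ s, q := Finset.sum_le_sum fun i _ => hn_single_d_le d q hq i (w i)
    _ = s.card * q := by rw [Finset.sum_const, smul_eq_mul]
    _ = hammingNorm w * q := by rw [hs, hn_filter]

/-- `Reach d E x`: there is a 1-continuous path from 0 to x with all syndrome weights ≤ E. -/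
def Reach (E : ℕ) (x : ι → ZMod 2) : Prop :=
  ∃ (T : ℕ) (γ : ℕ → ι → ZMod 2), γ 0 = 0 ∧ γ T = x ∧
    (∀ t, 1 ≤ t → t ≤ T → hammingNorm (γ t - γ (t - 1)) ≤ 1) ∧
    (∀ t, t ≤ T → hammingNorm (d (γ t)) ≤ E)

lemma reach_zero (E : ℕ) : Reach d E 0 :=
  ⟨0, fun _ => 0, rfl, rfl, fun t h1 h0 => absurd (h1.trans h0) (by simp),
    fun t _ => by simp⟩

lemma reach_step {E : ℕ} {x y : ι → ZMod 2} (hx : Reach d E x)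
    (hstep : hammingNorm (y - x) ≤ 1) (hy : hammingNorm (d y) ≤ E) : Reach d E y := by
  obtain ⟨T, γ, h0, hT, hs, hE⟩ := hx
  refine ⟨T + 1, fun t => if t ≤ T then γ t else y, by simp [h0], by simp, ?_, ?_⟩
  · intro t h1 h2
    rcases Nat.lt_or_ge t (T + 1) with h | h
    · have ht : t ≤ T := Nat.lt_succ_iff.mp h
      have ht' : t - 1 ≤ T := le_trans (Nat.sub_le t 1) ht
      simp only [if_pos ht, if_pos ht']
      exact hs t h1 ht
    · have ht : t = T + 1 := le_antisymm h2 h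
      subst ht
      simp only [Nat.add_sub_cancel, if_pos (le_refl T), if_neg (Nat.not_succ_le_self T)]
      rwa [hT]
  · intro t h2
    rcases Nat.lt_or_ge t (T + 1) with h | h
    · have ht : t ≤ T := Nat.lt_succ_iff.mp h
      simpa only [if_pos ht] using hE t ht
    · have ht : t = T + 1 := le_antisymm h2 h
      subst ht
      simpa only [if_neg (Nat.not_succ_le_self T)] using hy

lemma reach_add_sum (q : ℕ) (hq : ∀ i : ι, hammingNorm (d (Pi.single i 1)) ≤ q)
    {E : ℕ} (s : Finset ι) (w : ι → ZMod 2) {x : ι → ZMod 2} (hx : Reach d E x)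
    (hcard : hammingNorm (d x) + s.card * q ≤ E) :
    Reach d E (x + ∑ i ∈ s, Pi.single i (w i)) := by
  classical
  induction s using Finset.induction_on with
  | empty => simpa using hx
  | @insert a s ha ih =>
    rw [Finset.card_insert_of_notMem ha] at hcard
    have hcard' : hammingNorm (d x) + s.card * q ≤ E :=
      le_trans (Nat.add_le_add_left (Nat.mul_le_mul_right q (Nat.le_succ _)) _) hcard
    have hz := ih hcard'
    set z := x + ∑ i ∈ s, Pi.single i (w i) with hzdef
    have hnormsum : ∀ u : Finset ι, hammingNorm (∑ i ∈ u, (Pi.single i (w i) : ι → ZMod 2)) ≤ u.card := by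
      intro u
      calc hammingNorm (∑ i ∈ u, (Pi.single i (w i) : ι → ZMod 2))
          ≤ ∑ i ∈ u, hammingNorm (Pi.single i (w i) : ι → ZMod 2) := hn_sum_le _ _
        _ ≤ ∑ _i ∈ u, 1 := Finset.sum_le_sum fun i _ => hn_single_le i (w i)
        _ = u.card := by simp
    have key : hammingNorm (d (x + ∑ i ∈ insert a s, Pi.single i (w i))) ≤ E := by
      calc hammingNorm (d (x + ∑ i ∈ insert a s, Pi.single i (w i)))
          ≤ hammingNorm (d x) + hammingNorm (d (∑ i ∈ insert a s, Pi.single i (w i))) := by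
            rw [map_add]; exact hn_add_le _ _
        _ ≤ hammingNorm (d x) + hammingNorm (∑ i ∈ insert a s, (Pi.single i (w i) : ι → ZMod 2)) * q :=
            Nat.add_le_add_left (hn_d_le d q hq _) _
        _ ≤ hammingNorm (d x) + (insert a s).card * q :=
            Nat.add_le_add_left (Nat.mul_le_mul_right q (hnormsum _)) _
        _ ≤ E := by rwa [Finset.card_insert_of_notMem ha]
    have heq : x + ∑ i ∈ insert a s, Pi.single i (w i) = z + Pi.single a (w a) := by
      rw [Finset.sum_insert ha, hzdef]; ring
    rw [heq] at key ⊢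
    refine reach_step d hz ?_ key
    rw [add_sub_cancel_left]
    exact hn_single_le a (w a)

lemma reach_target (q : ℕ) (hq : ∀ i : ι, hammingNorm (d (Pi.single i 1)) ≤ q)
    {E : ℕ} {x y : ι → ZMod 2} (hx : Reach d E x)
    (hb : hammingNorm (d x) + hammingNorm (y - x) * q ≤ E) : Reach d E y := by
  have := reach_add_sum d q hq (Finset.univ.filter (fun i => (y - x) i ≠ 0)) (y - x) hx
    (by rwa [hn_filter])
  rwa [filter_sum_eq, add_sub_cancel] at this

end main
noncomputable def energyBarrier {ι κ : Type*} [Fintype ι] [Fintype κ]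
    (d : (ι → ZMod 2) →ₗ[ZMod 2] (κ → ZMod 2)) (c : ℕ) (e : ι → ZMod 2) : ℕ :=
  sInf { Δ : ℕ | ∃ (T : ℕ) (γ : ℕ → ι → ZMod 2),
    γ 0 = 0 ∧ γ T = e ∧
    (∀ t, 1 ≤ t → t ≤ T → hammingNorm (γ t - γ (t - 1)) ≤ c) ∧
    Δ = (Finset.range (T + 1)).sup fun t => hammingNorm (d (γ t)) }

/-- **Relation between step sizes.**
If `𝔮` is the maximum over `i` of the weight `|d δ_i|` of a single-qubit syndrome,
then `Δ₁(e) ≤ Δ_c(e) + c·𝔮` for every `e`. -/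
theorem stmt6 {ι κ : Type*} [Fintype ι] [Fintype κ] [DecidableEq ι]
    (d : (ι → ZMod 2) →ₗ[ZMod 2] (κ → ZMod 2)) (c : ℕ) (hc : 1 ≤ c)
    (q : ℕ) (hq : q = Finset.univ.sup fun i : ι => hammingNorm (d (Pi.single i 1)))
    (e : ι → ZMod 2) :
    energyBarrier d 1 e ≤ energyBarrier d c e + c * q := by

  have hq' : ∀ i : ι, hammingNorm (d (Pi.single i 1)) ≤ q := by
    intro i; rw [hq]; exact Finset.le_sup (f := fun i : ι => hammingNorm (d (Pi.single i 1))) (Finset.mem_univ i)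
  have key : ∀ (c' : ℕ), 1 ≤ c' → ∀ (E : ℕ) (y : ι → ZMod 2), Reach d E y →
      energyBarrier d c' y ≤ E := by
    rintro c' hc' E y ⟨T, γ, h0, hT, hs, hE⟩
    have hmem : ((Finset.range (T + 1)).sup fun t => hammingNorm (d (γ t))) ∈
        { Δ : ℕ | ∃ (T : ℕ) (γ : ℕ → ι → ZMod 2),
          γ 0 = 0 ∧ γ T = y ∧
          (∀ t, 1 ≤ t → t ≤ T → hammingNorm (γ t - γ (t - 1)) ≤ c') ∧
          Δ = (Finset.range (T + 1)).sup fun t => hammingNorm (d (γ t)) } :=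
      ⟨T, γ, h0, hT, fun t h1 h2 => (hs t h1 h2).trans hc', rfl⟩
    refine le_trans (Nat.sInf_le hmem) ?_
    exact Finset.sup_le fun t ht => hE t (Nat.lt_succ_iff.mp (Finset.mem_range.mp ht))
  have hre : Reach d (Fintype.card ι * q) e := by
    refine reach_target d q hq' (reach_zero d _) ?_
    rw [map_zero, hammingNorm_zero, sub_zero, zero_add]
    exact Nat.mul_le_mul_right q hammingNorm_le_card_fintype
  have hne : { Δ : ℕ | ∃ (T : ℕ) (γ : ℕ → ι → ZMod 2),
      γ 0 = 0 ∧ γ T = e ∧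
      (∀ t, 1 ≤ t → t ≤ T → hammingNorm (γ t - γ (t - 1)) ≤ c) ∧
      Δ = (Finset.range (T + 1)).sup fun t => hammingNorm (d (γ t)) }.Nonempty := by
    obtain ⟨T, γ, h0, hT, hs, hE⟩ := hre
    exact ⟨_, T, γ, h0, hT, fun t h1 h2 => (hs t h1 h2).trans hc, rfl⟩
  obtain ⟨T, γ, h0, hT, hs, hΔ⟩ := Nat.sInf_mem hne
  have hΔ' : energyBarrier d c e =
      (Finset.range (T + 1)).sup fun t => hammingNorm (d (γ t)) := hΔ
  have hreach : ∀ t, t ≤ T → Reach d (energyBarrier d c e + c * q) (γ t) := by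
    intro t
    induction t with
    | zero => intro _; rw [h0]; exact reach_zero d _
    | succ n ih =>
      intro hn1
      have hn : n ≤ T := le_trans (Nat.le_succ n) hn1
      refine reach_target d q hq' (ih hn) ?_
      have h1 : hammingNorm (d (γ n)) ≤ energyBarrier d c e := by
        rw [hΔ']
        exact Finset.le_sup (f := fun t => hammingNorm (d (γ t))) (Finset.mem_range.mpr (Nat.lt_succ_of_le hn))
      have h2 : hammingNorm (γ (n + 1) - γ n) ≤ c := by
        simpa using hs (n + 1) (Nat.le_add_left 1 n) hn1
      exact Nat.add_le_add h1 (Nat.mul_le_mul_right q h2)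
  have := hreach T le_rfl
  rw [hT] at this
  exact key 1 le_rfl _ e this
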